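/- Let n ≥ 5 and define c(n) = ((n−2)/2) c₀² ∫_{ℝⁿ} (|x|²−1)/(1+|x|²)^{n−1} dx, where c₀ = (n(n−2))^{(n−2)/4}. Then the integral converges and c(n) > 0. -/

import Mathlib

open MeasureTheory Set Real

noncomputable def Gfun (k : ℕ) (y : ℝ) : ℝ := y ^ (k + 4) * ((y ^ 2 - 1) / (1 + y ^ 2) ^ (k + 4))
noncomputable def Hfun (k : ℕ) (y : ℝ) : ℝ := y ^ k * ((1 - y ^ 2) / (1 + y ^ 2) ^ (k + 4))
noncomputable def Pfun (k : ℕ) (y : ℝ) : ℝ := y ^ k * (y ^ 2 - 1) ^ 2 / (1 + y ^ 2) ^ (k + 3)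

lemma den_pos (y : ℝ) : (0:ℝ) < 1 + y ^ 2 := by positivity

lemma Gcont (k : ℕ) : Continuous (Gfun k) := by
  unfold Gfun
  fun_prop (disch := intro y; positivity)

lemma key_id (k : ℕ) {x : ℝ} (hx : 0 < x) :
    (|(-1:ℝ)| * x ^ ((-1:ℝ) - 1)) • Gfun k (x ^ (-1:ℝ)) = Hfun k x := by
  have hx0 : x ≠ 0 := hx.ne'
  rw [Real.rpow_neg_one, show ((-1:ℝ) - 1) = -2 by norm_num,
    show ((-2:ℝ)) = -(2:ℕ) by norm_num, Real.rpow_neg hx.le, Real.rpow_natCast]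
  unfold Gfun Hfun
  have h1 : (1 : ℝ) + (x⁻¹) ^ 2 ≠ 0 := by positivity
  have h2 : (1 : ℝ) + x ^ 2 ≠ 0 := by positivity
  simp only [abs_neg, abs_one, one_mul, smul_eq_mul]
  rw [show (1 : ℝ) + (x⁻¹) ^ 2 = (1 + x ^ 2) / x ^ 2 by field_simp; ring,
    show (x⁻¹) ^ 2 - 1 = (1 - x ^ 2) / x ^ 2 by field_simp, inv_pow, div_pow, ← pow_mul]
  field_simp
  ring

lemma Gint (k : ℕ) : IntegrableOn (Gfun k) (Ioi 0) := by
  have h1 : IntegrableOn (Gfun k) (Ioc 0 1) := (Gcont k).integrableOn_Ioc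
  have h2 : IntegrableOn (Gfun k) (Ioi 1) := by
    refine Integrable.mono' (g := fun y : ℝ => y ^ (-2 : ℝ))
      (integrableOn_Ioi_rpow_of_lt (by norm_num) one_pos)
      ((Gcont k).aestronglyMeasurable.restrict) ?_
    filter_upwards [ae_restrict_mem measurableSet_Ioi] with y hy
    have hy1 : (1:ℝ) < y := hy
    have hy0 : (0:ℝ) < y := by linarith
    have hden := den_pos y
    have habs : |y ^ 2 - 1| ≤ 1 + y ^ 2 := by
      rw [abs_le]; constructor <;> nlinarith
    calc |Gfun k y| = y ^ (k+4) * |y ^ 2 - 1| / (1 + y ^ 2) ^ (k+4) := by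
          unfold Gfun
          rw [abs_mul, abs_div, abs_pow, abs_pow, abs_of_pos hy0,
            abs_of_pos hden, mul_div_assoc]
      _ ≤ y ^ (k+4) * (1 + y ^ 2) / (1 + y ^ 2) ^ (k+4) := by gcongr
      _ = y ^ (k+4) / (1 + y ^ 2) ^ (k+3) := by
          rw [pow_succ]
          field_simp
          ring
      _ ≤ y ^ (k+4) / (y ^ 2) ^ (k+3) := by
          apply div_le_div_of_nonneg_left (by positivity) (by positivity)
          exact pow_le_pow_left₀ (by positivity) (by linarith) _
      _ = 1 / y ^ (k+2) := by
          rw [← pow_mul]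
          rw [show 2 * (k+3) = (k+4) + (k+2) by ring, pow_add]
          field_simp
          ring
      _ ≤ 1 / y ^ 2 := by
          apply one_div_le_one_div_of_le (by positivity)
          exact pow_le_pow_right₀ hy1.le (by omega)
      _ = y ^ (-2 : ℝ) := by
          rw [show ((-2:ℝ)) = -(2:ℕ) by norm_num, Real.rpow_neg hy0.le,
            Real.rpow_natCast, one_div]
  have := h1.union h2
  rwa [Ioc_union_Ioi_eq_Ioi (le_of_lt one_pos)] at this

lemma Hint (k : ℕ) : IntegrableOn (Hfun k) (Ioi 0) := by
  have := (integrableOn_Ioi_comp_rpow_iff (Gfun k) (p := -1) (by norm_num)).mpr (Gint k)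
  exact this.congr_fun (fun x hx => key_id k hx) measurableSet_Ioi

lemma GH_eq (k : ℕ) : ∫ y in Ioi (0:ℝ), Gfun k y = ∫ y in Ioi (0:ℝ), Hfun k y := by
  rw [← integral_comp_rpow_Ioi (Gfun k) (p := -1) (by norm_num)]
  exact setIntegral_congr_fun measurableSet_Ioi (fun x hx => key_id k hx)

lemma GplusH (k : ℕ) {y : ℝ} : Gfun k y + Hfun k y = Pfun k y := by
  unfold Gfun Hfun Pfun
  have h2 : (1 : ℝ) + y ^ 2 ≠ 0 := (den_pos y).ne'
  field_simp
  ring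

lemma Gpos (k : ℕ) : 0 < ∫ y in Ioi (0:ℝ), Gfun k y := by
  have h2 : (0:ℝ) < 2⁻¹ := by norm_num
  have key : 0 < ∫ y in Ioi (0:ℝ), Pfun k y := by
    rw [setIntegral_pos_iff_support_of_nonneg_ae]
    · refine lt_of_lt_of_le ?_ (measure_mono (show Ioo (2:ℝ) 3 ⊆ _ from ?_))
      · rw [Real.volume_Ioo]; norm_num
      · intro y hy
        have hy2 : (2:ℝ) < y := hy.1
        have hy3 : y < 3 := hy.2
        have h1 : (0:ℝ) < y := by linarith
        refine ⟨?_, by exact h1⟩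
        have : (0:ℝ) < Pfun k y := by
          unfold Pfun
          exact div_pos (mul_pos (pow_pos h1 _) (pow_pos (by nlinarith) _)) (by positivity)
        exact this.ne'
    · filter_upwards [ae_restrict_mem measurableSet_Ioi] with y hy
      unfold Pfun
      have h1 : (0:ℝ) < y := hy
      positivity
    · refine Integrable.congr ((Gint k).add (Hint k)) ?_
      filter_upwards with y using GplusH k
  have : ∫ y in Ioi (0:ℝ), Pfun k y = 2 * ∫ y in Ioi (0:ℝ), Gfun k y := by
    rw [← setIntegral_congr_fun measurableSet_Ioi (fun y _ => (GplusH k (y := y))),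
      integral_add (Gint k) (Hint k), ← GH_eq]
    ring
  rw [this] at key
  linarith

theorem stmt_16 (n : ℕ) (hn : 5 ≤ n) :
    let c₀ : ℝ := (n * (n - 2) : ℝ) ^ (((n : ℝ) - 2) / 4)
    let f : EuclideanSpace ℝ (Fin n) → ℝ :=
      fun x => (‖x‖ ^ 2 - 1) / (1 + ‖x‖ ^ 2) ^ (n - 1)
    Integrable f ∧ 0 < (((n : ℝ) - 2) / 2) * c₀ ^ 2 * ∫ x, f x := by
  obtain ⟨k, rfl⟩ := Nat.exists_eq_add_of_le hn
  intro c₀ f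
  have hsub : 5 + k - 1 = k + 4 := by omega
  have hf : f = fun x : EuclideanSpace ℝ (Fin (5 + k)) =>
      (‖x‖ ^ 2 - 1) / (1 + ‖x‖ ^ 2) ^ (5 + k - 1) := rfl
  haveI : Nontrivial (EuclideanSpace ℝ (Fin (5 + k))) := by
    refine ⟨EuclideanSpace.single ⟨0, by omega⟩ (1:ℝ), 0, ?_⟩
    intro h
    have := congrArg (fun v : EuclideanSpace ℝ (Fin (5 + k)) => v ⟨0, by omega⟩) h
    simp [EuclideanSpace.single] at this
  -- Integrability
  have hint : Integrable f := by
    have hb : Integrable (fun x : EuclideanSpace ℝ (Fin (5 + k)) =>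
        ((1:ℝ) + ‖x‖ ^ 2) ^ (-(2 * ((k:ℝ) + 3)) / 2)) volume := by
      apply integrable_rpow_neg_one_add_norm_sq
      rw [finrank_euclideanSpace_fin]
      push_cast
      linarith
    have hfm : AEStronglyMeasurable f volume := by
      rw [hf]
      apply Continuous.aestronglyMeasurable
      fun_prop (disch := intro x; positivity)
    refine hb.mono' hfm ?_
    filter_upwards with x
    have hs : (0:ℝ) ≤ ‖x‖ := norm_nonneg x
    have hden := den_pos ‖x‖
    have habs : |‖x‖ ^ 2 - 1| ≤ 1 + ‖x‖ ^ 2 := by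
      rw [abs_le]; constructor <;> nlinarith
    have hr : (-(2 * ((k:ℝ) + 3)) / 2) = -((k + 3 : ℕ) : ℝ) := by push_cast; ring
    rw [hf, hr, Real.rpow_neg hden.le, Real.rpow_natCast, hsub]
    calc |(‖x‖ ^ 2 - 1) / (1 + ‖x‖ ^ 2) ^ (k + 4)|
        = |‖x‖ ^ 2 - 1| / (1 + ‖x‖ ^ 2) ^ (k + 4) := by
          rw [abs_div, abs_pow, abs_of_pos hden]
      _ ≤ (1 + ‖x‖ ^ 2) / (1 + ‖x‖ ^ 2) ^ (k + 4) := by gcongr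
      _ = ((1 + ‖x‖ ^ 2) ^ (k + 3))⁻¹ := by
          rw [pow_succ]
          field_simp
          ring
  refine ⟨hint, ?_⟩
  -- Polar coordinates
  have hpol := integral_fun_norm_addHaar (volume : Measure (EuclideanSpace ℝ (Fin (5 + k))))
    (fun y : ℝ => (y ^ 2 - 1) / (1 + y ^ 2) ^ (5 + k - 1))
  simp only [finrank_euclideanSpace_fin, hsub, smul_eq_mul, nsmul_eq_mul] at hpol
  have hGpos := Gpos k
  simp only [Gfun] at hGpos
  have hI : ∫ x, f x = (5 + k : ℕ) * ((volume (Metric.ball (0 : EuclideanSpace ℝ (Fin (5 + k))) 1)).toReal *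
      ∫ y in Ioi (0:ℝ), y ^ (k + 4) * ((y ^ 2 - 1) / (1 + y ^ 2) ^ (k + 4))) := by
    rw [hf]
    simp only [hsub]
    exact hpol
  have hball : 0 < (volume (Metric.ball (0 : EuclideanSpace ℝ (Fin (5 + k))) 1)).toReal :=
    ENNReal.toReal_pos (Metric.measure_ball_pos _ _ one_pos).ne' measure_ball_lt_top.ne
  have hfpos : 0 < ∫ x, f x := by
    rw [hI]
    have : (0:ℝ) < (5 + k : ℕ) := by positivity
    positivity
  have hc0 : (0:ℝ) < c₀ := by
    apply Real.rpow_pos_of_pos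
    have : ((5 + k : ℕ) : ℝ) = (k : ℝ) + 5 := by push_cast; ring
    rw [this]
    nlinarith [Nat.cast_nonneg (α := ℝ) k]
  have h2 : (0:ℝ) < (((5 + k : ℕ) : ℝ) - 2) / 2 := by
    have : ((5 + k : ℕ) : ℝ) = (k : ℝ) + 5 := by push_cast; ring
    rw [this]
    have := Nat.cast_nonneg (α := ℝ) k
    linarith
  exact mul_pos (mul_pos h2 (pow_pos hc0 2)) hfpos
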